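/- Let α be irrational. There exists a strictly increasing sequence (N_i) of integers such that each N_i + 1 is a closest return time (i.e. (N_i + 1)α ∈ [−a_{N_i}, b_{N_i}] mod 1) and, for every i, either a_{N_i} < b_{N_i} and r_{N_i} ≤ 2 s_{N_i}, or a_{N_i} > b_{N_i} and s_{N_i} ≤ 2 r_{N_i}. -/

import Mathlib

open Set Filter

/-- `inArc a w b` : the point `w` (mod 1) lies strictly inside the positively oriented
open arc of the circle `ℝ/ℤ` from `a` (mod 1) to `b` (mod 1). -/
def inArc (a w b : ℝ) : Prop :=
  0 < Int.fract (w - a) ∧ Int.fract (w - a) < Int.fract (b - a)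

/-- `bseq α n = b_n` : the distance from `0` to the nearest point of the orbit segment
`{α, 2α, …, nα}` on its right, i.e. the least fractional part `{kα}`, `1 ≤ k ≤ n`. -/
noncomputable def bseq (α : ℝ) (n : ℕ) : ℝ :=
  sInf {t : ℝ | ∃ k : ℕ, 1 ≤ k ∧ k ≤ n ∧ t = Int.fract ((k : ℝ) * α)}

/-- `aseq α n = a_n` : the distance from `0` to the nearest point of the orbit segment
`{α, 2α, …, nα}` on its left, i.e. `1` minus the largest fractional part `{kα}`, `1 ≤ k ≤ n`. -/
noncomputable def aseq (α : ℝ) (n : ℕ) : ℝ :=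
  1 - sSup {t : ℝ | ∃ k : ℕ, 1 ≤ k ∧ k ≤ n ∧ t = Int.fract ((k : ℝ) * α)}

/-- `r` is the index `r_n ∈ {1,…,n}` with `r_n α = -a_n` (mod 1). -/
def IsRIndex (α : ℝ) (n r : ℕ) : Prop :=
  1 ≤ r ∧ r ≤ n ∧ Int.fract ((r : ℝ) * α) = 1 - aseq α n

/-- `s` is the index `s_n ∈ {1,…,n}` with `s_n α = b_n` (mod 1). -/
def IsSIndex (α : ℝ) (n s : ℕ) : Prop :=
  1 ≤ s ∧ s ≤ n ∧ Int.fract ((s : ℝ) * α) = bseq α n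

/-- `n + 1` is a closest return time: `(n+1)α ∈ [-a_n, b_n]` (mod 1). -/
def IsClosestReturn (α : ℝ) (n : ℕ) : Prop :=
  Int.fract (((n : ℝ) + 1) * α) ≤ bseq α n ∨ 1 - aseq α n ≤ Int.fract (((n : ℝ) + 1) * α)

/-- The set of reals lying (mod 1) in the positively oriented open arc from `u` to `v`. -/
def arcSet (u v : ℝ) : Set ℝ := {z : ℝ | inArc u z v}

/-- The intervals `I_n, R_α(I_n), …, R_α^w(I_n), R_α^{-w}(J_n), …, J_n` are pairwise
disjoint, where `I_n = (r α, s α)` and `J_n = ((n-s)α, (n-r)α)` (mod 1). -/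
def WanderDisjoint (α : ℝ) (n r s : ℕ) (w : ℤ) : Prop :=
  ∀ k l : ℤ, 0 ≤ k → k ≤ w → 0 ≤ l → l ≤ w →
    (k ≠ l → Disjoint (arcSet (((r : ℝ) + k) * α) (((s : ℝ) + k) * α))
      (arcSet (((r : ℝ) + l) * α) (((s : ℝ) + l) * α))) ∧
    (k ≠ l → Disjoint (arcSet (((n : ℝ) - s - k) * α) (((n : ℝ) - r - k) * α))
      (arcSet (((n : ℝ) - s - l) * α) (((n : ℝ) - r - l) * α))) ∧
    Disjoint (arcSet (((r : ℝ) + k) * α) (((s : ℝ) + k) * α))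
      (arcSet (((n : ℝ) - s - l) * α) (((n : ℝ) - r - l) * α))

/-- `w` is the *wandering time* `w(n)` : the largest integer `w` such that the intervals
`I_n, R_α(I_n), …, R_α^w(I_n), R_α^{-w}(J_n), …, J_n` are pairwise disjoint. -/
def IsWanderingTime (α : ℝ) (n r s : ℕ) (w : ℤ) : Prop :=
  WanderDisjoint α n r s w ∧ ∀ w' : ℤ, WanderDisjoint α n r s w' → w' ≤ w

namespace BR


noncomputable def f (α : ℝ) (k : ℕ) : ℝ := Int.fract ((k : ℝ) * α)

lemma f_nonneg (α : ℝ) (k : ℕ) : 0 ≤ f α k := Int.fract_nonneg _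
lemma f_lt_one (α : ℝ) (k : ℕ) : f α k < 1 := Int.fract_lt_one _

lemma f_pos {α : ℝ} (hα : Irrational α) {k : ℕ} (hk : 1 ≤ k) : 0 < f α k := by
  rcases lt_or_eq_of_le (f_nonneg α k) with h | h
  · exact h
  · exfalso
    have h1 : Irrational ((k : ℝ) * α) := hα.natCast_mul (by omega)
    have h3 := Int.floor_add_fract ((k : ℝ) * α)
    unfold f at h
    exact h1.ne_int ⌊(k : ℝ) * α⌋ (by linarith)

lemma f_inj {α : ℝ} (hα : Irrational α) {j k : ℕ} (h : f α j = f α k) : j = k := by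
  rcases Int.fract_eq_fract.1 h with ⟨z, hz⟩
  by_contra hne
  have hirr : Irrational ((((j : ℤ) - (k : ℤ)) : ℤ) * α) :=
    hα.intCast_mul (by omega)
  apply hirr.ne_int z
  push_cast
  linarith

lemma f_add (α : ℝ) (j k : ℕ) : f α (j + k) = Int.fract (f α j + f α k) := by
  have h : f α j + f α k = ((j : ℝ) * α + (k : ℝ) * α) - ((⌊(j : ℝ) * α⌋ + ⌊(k : ℝ) * α⌋ : ℤ) : ℝ) := by
    unfold f Int.fract; push_cast; ring
  rw [h, Int.fract_sub_intCast]
  unfold f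
  push_cast
  ring_nf

lemma fract_of_lt {x : ℝ} (h0 : 0 ≤ x) (h1 : x < 1) : Int.fract x = x := Int.fract_eq_self.2 ⟨h0, h1⟩

lemma fract_of_ge {x : ℝ} (h0 : 1 ≤ x) (h1 : x < 2) : Int.fract x = x - 1 := by
  have := Int.fract_sub_intCast x 1
  push_cast at this
  rw [← this, fract_of_lt (by linarith) (by linarith)]

lemma f_add_cases {α : ℝ} (hα : Irrational α) {j k : ℕ} (hj : 1 ≤ j) (hk : 1 ≤ k) :
    (f α j + f α k < 1 ∧ f α (j + k) = f α j + f α k) ∨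
    (1 < f α j + f α k ∧ f α (j + k) = f α j + f α k - 1) := by
  have hs := f_add α j k
  rcases lt_trichotomy (f α j + f α k) 1 with h | h | h
  · exact Or.inl ⟨h, by
      rw [hs, fract_of_lt (by linarith [f_nonneg α j, f_nonneg α k]) h]⟩
  · exfalso
    rw [h, Int.fract_one] at hs
    exact absurd hs (ne_of_gt (f_pos hα (by omega)))
  · exact Or.inr ⟨h, by
      rw [hs, fract_of_ge h.le (by linarith [f_lt_one α j, f_lt_one α k])]⟩



noncomputable abbrev T (α : ℝ) (n : ℕ) : Set ℝ :=
  {t : ℝ | ∃ k : ℕ, 1 ≤ k ∧ k ≤ n ∧ t = Int.fract ((k : ℝ) * α)}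

lemma bseq_def (α : ℝ) (n : ℕ) : bseq α n = sInf (T α n) := rfl
lemma aseq_def (α : ℝ) (n : ℕ) : 1 - aseq α n = sSup (T α n) := by unfold aseq T; ring

lemma T_finite (α : ℝ) (n : ℕ) : (T α n).Finite := by
  have hsub : T α n ⊆ f α '' (Set.Icc 1 n) := by
    rintro t ⟨k, h1, h2, rfl⟩; exact ⟨k, ⟨h1, h2⟩, rfl⟩
  exact ((Set.finite_Icc 1 n).image _).subset hsub

lemma mem_T {α : ℝ} {n k : ℕ} (h1 : 1 ≤ k) (h2 : k ≤ n) : f α k ∈ T α n := ⟨k, h1, h2, rfl⟩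

lemma T_nonempty {α : ℝ} {n : ℕ} (hn : 1 ≤ n) : (T α n).Nonempty := ⟨_, mem_T le_rfl hn⟩

lemma bseq_le {α : ℝ} {n k : ℕ} (h1 : 1 ≤ k) (h2 : k ≤ n) : bseq α n ≤ f α k :=
  csInf_le (T_finite α n).bddBelow (mem_T h1 h2)

lemma le_max' {α : ℝ} {n k : ℕ} (h1 : 1 ≤ k) (h2 : k ≤ n) : f α k ≤ 1 - aseq α n := by
  rw [aseq_def]; exact le_csSup (T_finite α n).bddAbove (mem_T h1 h2)

lemma bseq_eq_of {α : ℝ} {n k : ℕ} (h1 : 1 ≤ k) (h2 : k ≤ n)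
    (hub : ∀ j, 1 ≤ j → j ≤ n → f α k ≤ f α j) : bseq α n = f α k := by
  refine le_antisymm (bseq_le h1 h2) (le_csInf (T_nonempty (h1.trans h2)) ?_)
  rintro t ⟨j, hj1, hj2, rfl⟩; exact hub j hj1 hj2

lemma max_eq_of {α : ℝ} {n k : ℕ} (h1 : 1 ≤ k) (h2 : k ≤ n)
    (hub : ∀ j, 1 ≤ j → j ≤ n → f α j ≤ f α k) : 1 - aseq α n = f α k := by
  rw [aseq_def]
  refine le_antisymm (csSup_le (T_nonempty (h1.trans h2)) ?_)
    (le_csSup (T_finite α n).bddAbove (mem_T h1 h2))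
  rintro t ⟨j, hj1, hj2, rfl⟩; exact hub j hj1 hj2

lemma no_record {α : ℝ} (hα : Irrational α) {n r s : ℕ} {A B : ℝ}
    (hr1 : 1 ≤ r) (hs1 : 1 ≤ s) (hrn : r ≤ n) (hsn : s ≤ n)
    (hfr : f α r = A) (hfs : f α s = B)
    (hub : ∀ k, 1 ≤ k → k ≤ n → f α k ≤ A) (hlb : ∀ k, 1 ≤ k → k ≤ n → B ≤ f α k)
    {m : ℕ} (hm1 : n < m) (hm2 : m < r + s) : B < f α m ∧ f α m < A := by
  have hA1 : A < 1 := hfr ▸ f_lt_one α r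
  have hB1 : B < 1 := hfs ▸ f_lt_one α s
  have hA0 : 0 < A := hfr ▸ f_pos hα hr1
  have hB0 : 0 < B := hfs ▸ f_pos hα hs1
  constructor
  · by_contra hcon
    push_neg at hcon
    have hne : f α m ≠ B := fun he => by
      have := f_inj hα (he.trans hfs.symm); omega
    have hlt : f α m < B := lt_of_le_of_ne hcon hne
    set k := m - r with hkdef
    have hkm : k + r = m := by omega
    have hk1 : 1 ≤ k := by omega
    have hks : k < s := by omega
    have hkn : k ≤ n := by omega
    have hkpos := f_pos hα hk1
    have hklb := hlb k hk1 hkn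
    rcases f_add_cases hα hk1 hr1 with ⟨h1, h2⟩ | ⟨h1, h2⟩
    · rw [hkm, hfr] at h2
      linarith
    · rw [hkm, hfr] at h2
      set j := s - k with hjdef
      have hjk : j + k = s := by omega
      have hj1 : 1 ≤ j := by omega
      have hjn : j ≤ n := by omega
      have hjub := hub j hj1 hjn
      have hjlb := hlb j hj1 hjn
      rcases f_add_cases hα hj1 hk1 with ⟨h3, h4⟩ | ⟨h3, h4⟩
      · rw [hjk, hfs] at h4
        linarith
      · rw [hjk, hfs] at h4
        linarith
  · by_contra hcon
    push_neg at hcon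
    have hne : f α m ≠ A := fun he => by
      have := f_inj hα (he.trans hfr.symm); omega
    have hgt : A < f α m := lt_of_le_of_ne hcon (Ne.symm hne)
    have hm1' : f α m < 1 := f_lt_one α m
    set k := m - s with hkdef
    have hkm : k + s = m := by omega
    have hk1 : 1 ≤ k := by omega
    have hkr : k < r := by omega
    have hkn : k ≤ n := by omega
    have hkub := hub k hk1 hkn
    rcases f_add_cases hα hk1 hs1 with ⟨h1, h2⟩ | ⟨h1, h2⟩
    · rw [hkm, hfs] at h2
      set j := r - k with hjdef
      have hjk : j + k = r := by omega
      have hj1 : 1 ≤ j := by omega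
      have hjn : j ≤ n := by omega
      have hjub := hub j hj1 hjn
      have hjlb := hlb j hj1 hjn
      rcases f_add_cases hα hj1 hk1 with ⟨h3, h4⟩ | ⟨h3, h4⟩
      · rw [hjk, hfr] at h4
        linarith
      · rw [hjk, hfr] at h4
        linarith
    · rw [hkm, hfs] at h2
      linarith

structure St (α : ℝ) (n r s : ℕ) : Prop where
  hr1 : 1 ≤ r
  hs1 : 1 ≤ s
  hrn : r ≤ n
  hsn : s ≤ n
  hsum : n + 1 = r + s
  hmax : f α r = 1 - aseq α n
  hmin : f α s = bseq α n

lemma st_one {α : ℝ} : St α 1 1 1 := by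
  have hmin : bseq α 1 = f α 1 := by
    refine bseq_eq_of le_rfl le_rfl ?_
    intro j h1 h2
    have hj : j = 1 := by omega
    rw [hj]
  have hmax : 1 - aseq α 1 = f α 1 := by
    refine max_eq_of le_rfl le_rfl ?_
    intro j h1 h2
    have hj : j = 1 := by omega
    rw [hj]
  exact ⟨le_rfl, le_rfl, le_rfl, le_rfl, rfl, hmax.symm, hmin.symm⟩

lemma st_ne {α : ℝ} (hα : Irrational α) {n r s : ℕ} (st : St α n r s) :
    aseq α n ≠ bseq α n := by
  intro h
  have h1 : f α r + f α s = 1 := by rw [st.hmax, st.hmin, ← h]; ring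
  have h2 := f_add α r s
  rw [h1, Int.fract_one] at h2
  exact absurd h2 (ne_of_gt (f_pos hα (by have := st.hr1; omega)))

lemma st_return {α : ℝ} (hα : Irrational α) {n r s : ℕ} (st : St α n r s) :
    IsClosestReturn α n := by
  obtain ⟨hr1, hs1, hrn, hsn, hsum, hmax, hmin⟩ := st
  have hfn : Int.fract (((n : ℝ) + 1) * α) = f α (n + 1) := by
    unfold f; congr 1; push_cast; ring
  have key : f α (n + 1) = f α r + f α s ∨ f α (n + 1) = f α r + f α s - 1 := by
    rcases f_add_cases hα hr1 hs1 with ⟨_, h2⟩ | ⟨_, h2⟩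
    · left; rw [hsum]; exact h2
    · right; rw [hsum]; exact h2
  have hB0 : 0 < bseq α n := hmin ▸ f_pos hα hs1
  have hA1 : f α r < 1 := f_lt_one α r
  rcases key with h | h
  · right; rw [hfn, h]; linarith [hmax, hmin]
  · left; rw [hfn, h]; linarith [hmax, hmin]

lemma st_step_right {α : ℝ} (hα : Irrational α) {n r s : ℕ} (st : St α n r s)
    (h : aseq α n < bseq α n) : St α (n + r) r (n + 1) := by
  obtain ⟨hr1, hs1, hrn, hsn, hsum, hmax, hmin⟩ := st
  set A := 1 - aseq α n with hA
  set B := bseq α n with hB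
  have hA1 : A < 1 := hmax ▸ f_lt_one α r
  have hB1 : B < 1 := hmin ▸ f_lt_one α s
  have hA0 : 0 < A := hmax ▸ f_pos hα hr1
  have hB0 : 0 < B := hmin ▸ f_pos hα hs1
  have hub : ∀ k, 1 ≤ k → k ≤ n → f α k ≤ A := fun k h1 h2 => le_max' h1 h2
  have hlb : ∀ k, 1 ≤ k → k ≤ n → B ≤ f α k := fun k h1 h2 => bseq_le h1 h2
  have hABgt : 1 < A + B := by rw [hA, hB]; linarith
  have hnew : f α (n + 1) = A + B - 1 := by
    rcases f_add_cases hα hr1 hs1 with ⟨h1, h2⟩ | ⟨h1, h2⟩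
    · rw [hmax, hmin] at h1; linarith
    · rw [hmax, hmin] at h2; rw [hsum]; exact h2
  have hub1 : ∀ k, 1 ≤ k → k ≤ n + 1 → f α k ≤ A := by
    intro k h1 h2
    rcases Nat.lt_or_ge k (n + 1) with h3 | h3
    · exact hub k h1 (by omega)
    · have hk : k = n + 1 := by omega
      rw [hk, hnew]; linarith
  have hlb1 : ∀ k, 1 ≤ k → k ≤ n + 1 → A + B - 1 ≤ f α k := by
    intro k h1 h2
    rcases Nat.lt_or_ge k (n + 1) with h3 | h3
    · have := hlb k h1 (by omega); linarith
    · have hk : k = n + 1 := by omega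
      rw [hk, hnew]
  have hub2 : ∀ k, 1 ≤ k → k ≤ n + r → f α k ≤ A := by
    intro k h1 h2
    rcases Nat.lt_or_ge k (n + 2) with h3 | h3
    · exact hub1 k h1 (by omega)
    · exact (no_record hα hr1 (show 1 ≤ n + 1 by omega) (show r ≤ n + 1 by omega) le_rfl
        hmax hnew hub1 hlb1 (show n + 1 < k by omega) (show k < r + (n + 1) by omega)).2.le
  have hlb2 : ∀ k, 1 ≤ k → k ≤ n + r → A + B - 1 ≤ f α k := by
    intro k h1 h2
    rcases Nat.lt_or_ge k (n + 2) with h3 | h3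
    · exact hlb1 k h1 (by omega)
    · exact (no_record hα hr1 (show 1 ≤ n + 1 by omega) (show r ≤ n + 1 by omega) le_rfl
        hmax hnew hub1 hlb1 (show n + 1 < k by omega) (show k < r + (n + 1) by omega)).1.le
  have hmaxnew : 1 - aseq α (n + r) = f α r :=
    max_eq_of (n := n + r) hr1 (by omega) (fun j hj1 hj2 => by rw [hmax]; exact hub2 j hj1 hj2)
  have hminnew : bseq α (n + r) = f α (n + 1) :=
    bseq_eq_of (n := n + r) (k := n + 1) (by omega) (by omega)
      (fun j hj1 hj2 => by rw [hnew]; exact hlb2 j hj1 hj2)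
  exact ⟨hr1, by omega, by omega, by omega, by omega, hmaxnew.symm, hminnew.symm⟩

lemma st_step_left {α : ℝ} (hα : Irrational α) {n r s : ℕ} (st : St α n r s)
    (h : bseq α n < aseq α n) : St α (n + s) (n + 1) s := by
  obtain ⟨hr1, hs1, hrn, hsn, hsum, hmax, hmin⟩ := st
  set A := 1 - aseq α n with hA
  set B := bseq α n with hB
  have hA1 : A < 1 := hmax ▸ f_lt_one α r
  have hB1 : B < 1 := hmin ▸ f_lt_one α s
  have hA0 : 0 < A := hmax ▸ f_pos hα hr1
  have hB0 : 0 < B := hmin ▸ f_pos hα hs1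
  have hub : ∀ k, 1 ≤ k → k ≤ n → f α k ≤ A := fun k h1 h2 => le_max' h1 h2
  have hlb : ∀ k, 1 ≤ k → k ≤ n → B ≤ f α k := fun k h1 h2 => bseq_le h1 h2
  have hABlt : A + B < 1 := by rw [hA, hB]; linarith
  have hnew : f α (n + 1) = A + B := by
    rcases f_add_cases hα hr1 hs1 with ⟨h1, h2⟩ | ⟨h1, h2⟩
    · rw [hmax, hmin] at h2; rw [hsum]; exact h2
    · rw [hmax, hmin] at h1; linarith
  have hub1 : ∀ k, 1 ≤ k → k ≤ n + 1 → f α k ≤ A + B := by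
    intro k h1 h2
    rcases Nat.lt_or_ge k (n + 1) with h3 | h3
    · have := hub k h1 (by omega); linarith
    · have hk : k = n + 1 := by omega
      rw [hk, hnew]
  have hlb1 : ∀ k, 1 ≤ k → k ≤ n + 1 → B ≤ f α k := by
    intro k h1 h2
    rcases Nat.lt_or_ge k (n + 1) with h3 | h3
    · exact hlb k h1 (by omega)
    · have hk : k = n + 1 := by omega
      rw [hk, hnew]; linarith
  have hub2 : ∀ k, 1 ≤ k → k ≤ n + s → f α k ≤ A + B := by
    intro k h1 h2
    rcases Nat.lt_or_ge k (n + 2) with h3 | h3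
    · exact hub1 k h1 (by omega)
    · exact (no_record hα (show 1 ≤ n + 1 by omega) hs1 le_rfl (show s ≤ n + 1 by omega)
        hnew hmin hub1 hlb1 (show n + 1 < k by omega) (show k < (n + 1) + s by omega)).2.le
  have hlb2 : ∀ k, 1 ≤ k → k ≤ n + s → B ≤ f α k := by
    intro k h1 h2
    rcases Nat.lt_or_ge k (n + 2) with h3 | h3
    · exact hlb1 k h1 (by omega)
    · exact (no_record hα (show 1 ≤ n + 1 by omega) hs1 le_rfl (show s ≤ n + 1 by omega)
        hnew hmin hub1 hlb1 (show n + 1 < k by omega) (show k < (n + 1) + s by omega)).1.le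
  have hmaxnew : 1 - aseq α (n + s) = f α (n + 1) :=
    max_eq_of (n := n + s) (k := n + 1) (by omega) (by omega)
      (fun j hj1 hj2 => by rw [hnew]; exact hub2 j hj1 hj2)
  have hminnew : bseq α (n + s) = f α s :=
    bseq_eq_of (n := n + s) hs1 (by omega) (fun j hj1 hj2 => by rw [hmin]; exact hlb2 j hj1 hj2)
  exact ⟨by omega, hs1, by omega, by omega, by omega, hmaxnew.symm, hminnew.symm⟩

def Goal (α : ℝ) (n : ℕ) : Prop := 1 ≤ n ∧ IsClosestReturn α n ∧
  ∀ r s : ℕ, IsRIndex α n r → IsSIndex α n s →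
    (aseq α n < bseq α n ∧ r ≤ 2 * s) ∨ (bseq α n < aseq α n ∧ s ≤ 2 * r)

lemma st_goal {α : ℝ} (hα : Irrational α) {n r s : ℕ} (st : St α n r s)
    (h : (aseq α n < bseq α n ∧ r ≤ 2 * s) ∨ (bseq α n < aseq α n ∧ s ≤ 2 * r)) :
    Goal α n := by
  refine ⟨by have := st.hr1; have := st.hrn; omega, st_return hα st, ?_⟩
  intro r₀ s₀ hr₀ hs₀
  have hfr₀ : f α r₀ = 1 - aseq α n := hr₀.2.2
  have hfs₀ : f α s₀ = bseq α n := hs₀.2.2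
  have hr : r₀ = r := f_inj hα (hfr₀.trans st.hmax.symm)
  have hs : s₀ = s := f_inj hα (hfs₀.trans st.hmin.symm)
  rw [hr, hs]
  exact h

lemma exists_st_ge {α : ℝ} (hα : Irrational α) (m : ℕ) : ∃ n r s, m ≤ n ∧ St α n r s := by
  induction m with
  | zero => exact ⟨1, 1, 1, by omega, st_one⟩
  | succ k ih =>
    obtain ⟨n, r, s, hkn, st⟩ := ih
    rcases Nat.lt_or_ge n (k + 1) with h | h
    · rcases (st_ne hα st).lt_or_gt with hab | hba
      · exact ⟨n + r, r, n + 1, by have := st.hr1; omega, st_step_right hα st hab⟩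
      · exact ⟨n + s, n + 1, s, by have := st.hs1; omega, st_step_left hα st hba⟩
    · exact ⟨n, r, s, h, st⟩

lemma exists_goal_ge {α : ℝ} (hα : Irrational α) (m : ℕ) : ∃ n, m ≤ n ∧ Goal α n := by
  obtain ⟨n, r, s, hmn, st⟩ := exists_st_ge hα m
  rcases (st_ne hα st).lt_or_gt with hab | hba
  · by_cases hb : r ≤ 2 * s
    · exact ⟨n, hmn, st_goal hα st (Or.inl ⟨hab, hb⟩)⟩
    · have st' := st_step_right hα st hab
      have h1 : r ≤ 2 * (n + 1) := by have := st.hrn; omega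
      have h2 : n + 1 ≤ 2 * r := by have := st.hsum; have := st.hs1; omega
      rcases (st_ne hα st').lt_or_gt with h' | h'
      · exact ⟨n + r, by omega, st_goal hα st' (Or.inl ⟨h', h1⟩)⟩
      · exact ⟨n + r, by omega, st_goal hα st' (Or.inr ⟨h', h2⟩)⟩
  · by_cases hb : s ≤ 2 * r
    · exact ⟨n, hmn, st_goal hα st (Or.inr ⟨hba, hb⟩)⟩
    · have st' := st_step_left hα st hba
      have h1 : n + 1 ≤ 2 * s := by have := st.hsum; have := st.hr1; omega
      have h2 : s ≤ 2 * (n + 1) := by have := st.hsn; omega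
      rcases (st_ne hα st').lt_or_gt with h' | h'
      · exact ⟨n + s, by omega, st_goal hα st' (Or.inl ⟨h', h1⟩)⟩
      · exact ⟨n + s, by omega, st_goal hα st' (Or.inr ⟨h', h2⟩)⟩

end BR

/-- **Lemma.** There is a strictly increasing sequence `(Nᵢ)` of integers such that each
`Nᵢ + 1` is a closest return time and, for every `i`, either `a_{Nᵢ} < b_{Nᵢ}` and
`r_{Nᵢ} ≤ 2 s_{Nᵢ}`, or `a_{Nᵢ} > b_{Nᵢ}` and `s_{Nᵢ} ≤ 2 r_{Nᵢ}`. -/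



theorem exists_balanced_return_sequence (α : ℝ) (hα : Irrational α) :
    ∃ N : ℕ → ℕ, StrictMono N ∧ ∀ i : ℕ, 1 ≤ N i ∧ IsClosestReturn α (N i) ∧
      ∀ r s : ℕ, IsRIndex α (N i) r → IsSIndex α (N i) s →
        (aseq α (N i) < bseq α (N i) ∧ r ≤ 2 * s) ∨
        (bseq α (N i) < aseq α (N i) ∧ s ≤ 2 * r) := by
  obtain ⟨g, hg⟩ := Classical.axiomOfChoice (fun m => BR.exists_goal_ge hα m)
  set N : ℕ → ℕ := fun i => Nat.rec (g 1) (fun _ prev => g (prev + 1)) i with hN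
  have hgoal : ∀ i, BR.Goal α (N i) := by
    intro i
    cases i with
    | zero => exact (hg 1).2
    | succ j => exact (hg _).2
  have hlt : ∀ i, N i < N (i + 1) := by
    intro i
    have h1 : N i + 1 ≤ g (N i + 1) := (hg (N i + 1)).1
    show N i < g (N i + 1)
    omega
  refine ⟨N, strictMono_nat_of_lt_succ hlt, fun i => ?_⟩
  exact ⟨(hgoal i).1, (hgoal i).2.1, (hgoal i).2.2⟩
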